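/- Suppose the data is separable with margin μ > 0 and satisfies the non-degeneracy assumption: for every j ∈ [n] and every tuple (k₁,…,k_n) of nonnegative integers, Σ_{i=1}^n (1/2 + k_i)⟨y_i a_i, y_j a_j⟩ ≠ 0. For each γ > 0, let (θ_t^{(γ)}) be the LR+GD iterates θ₀^{(γ)} = 0, θ_{t+1}^{(γ)} = θ_t^{(γ)} − γ ∇f(θ_t^{(γ)}), and let (θ̂_t) be the Batch Perceptron iterates from θ̂₀ = 0. Then for every t ≥ 0, θ_t^{(γ)}/γ → θ̂_t as γ → ∞. -/

import Mathlib

open scoped RealInnerProductSpace BigOperators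
open Filter

/-- The gradient of the logistic loss `f(θ) = (1/n) Σ_i log(1 + exp(-y_i aᵢᵀθ))`. -/
noncomputable def logisticGrad {d n : ℕ} (a : Fin n → EuclideanSpace ℝ (Fin d))
    (y : Fin n → ℝ) (θ : EuclideanSpace ℝ (Fin d)) : EuclideanSpace ℝ (Fin d) :=
  -(((1 : ℝ) / n) • ∑ i, ((1 + Real.exp (y i * ⟪a i, θ⟫))⁻¹ * y i) • a i)

private lemma sigmoid_limit {g : ℝ → ℝ} {c : ℝ} (hc : c ≠ 0)
    (hg : Tendsto g atTop (nhds c)) :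
    Tendsto (fun γ : ℝ => (1 + Real.exp (γ * g γ))⁻¹) atTop
      (nhds (if c ≤ 0 then 1 else 0)) := by
  rcases hc.lt_or_gt with h | h
  · rw [if_pos h.le]
    have h1 : Tendsto (fun γ : ℝ => γ * g γ) atTop atBot :=
      Filter.Tendsto.atTop_mul_neg h tendsto_id hg
    have h2 : Tendsto (fun γ : ℝ => Real.exp (γ * g γ)) atTop (nhds 0) :=
      Real.tendsto_exp_atBot.comp h1
    have h3 := ((tendsto_const_nhds (x := (1:ℝ))).add h2).inv₀ (by norm_num)
    simpa using h3
  · rw [if_neg (not_le.mpr h)]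
    have h1 : Tendsto (fun γ : ℝ => γ * g γ) atTop atTop :=
      Filter.Tendsto.atTop_mul_pos h tendsto_id hg
    have h2 : Tendsto (fun γ : ℝ => Real.exp (γ * g γ)) atTop atTop :=
      Real.tendsto_exp_atTop.comp h1
    have h3 : Tendsto (fun γ : ℝ => 1 + Real.exp (γ * g γ)) atTop atTop :=
      tendsto_atTop_add_const_left atTop 1 h2
    exact h3.inv_tendsto_atTop

theorem lr_gd_reduces_to_batch_perceptron {d n : ℕ} (hn : 0 < n)
    (a : Fin n → EuclideanSpace ℝ (Fin d)) (y : Fin n → ℝ)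
    (hy : ∀ i, y i = 1 ∨ y i = -1)
    (μ : ℝ) (hμ : 0 < μ)
    (θstar : EuclideanSpace ℝ (Fin d)) (hstar : ‖θstar‖ = 1)
    (hmargin : ∀ i, μ ≤ y i * ⟪a i, θstar⟫)
    (hnondeg : ∀ j : Fin n, ∀ k : Fin n → ℕ,
      ∑ i, ((1 / 2 : ℝ) + k i) * ⟪y i • a i, y j • a j⟫ ≠ 0)
    (θ : ℝ → ℕ → EuclideanSpace ℝ (Fin d))
    (hgd0 : ∀ γ : ℝ, θ γ 0 = 0)
    (hgdstep : ∀ γ : ℝ, ∀ t : ℕ, θ γ (t + 1) = θ γ t - γ • logisticGrad a y (θ γ t))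
    (θhat : ℕ → EuclideanSpace ℝ (Fin d))
    (h0 : θhat 0 = 0)
    (h1 : θhat 1 = θhat 0 + ((1 : ℝ) / (2 * n)) • ∑ i, y i • a i)
    (hstep : ∀ t, 1 ≤ t →
      θhat (t + 1) = θhat t + ((1 : ℝ) / n) •
        ∑ i ∈ Finset.univ.filter (fun i => y i * ⟪a i, θhat t⟫ ≤ 0), y i • a i) :
    ∀ t : ℕ, Filter.Tendsto (fun γ : ℝ => γ⁻¹ • θ γ t) Filter.atTop (nhds (θhat t)) := by
  classical
  have hnR : (n : ℝ) ≠ 0 := Nat.cast_ne_zero.mpr hn.ne'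
  -- the gradient step in additive form
  have step : ∀ (γ : ℝ), γ ≠ 0 → ∀ t : ℕ,
      γ⁻¹ • θ γ (t + 1) = γ⁻¹ • θ γ t +
        ((1 : ℝ) / n) • ∑ i, ((1 + Real.exp (y i * ⟪a i, θ γ t⟫))⁻¹ * y i) • a i := by
    intro γ hγ t
    rw [hgdstep γ t, smul_sub, smul_smul, inv_mul_cancel₀ hγ, one_smul, logisticGrad,
      sub_neg_eq_add]
  suffices H : ∀ t : ℕ,
      Filter.Tendsto (fun γ : ℝ => γ⁻¹ • θ γ t) Filter.atTop (nhds (θhat t)) ∧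
      (t = 0 ∨ ∃ k : Fin n → ℕ,
        θhat t = ((1 : ℝ) / n) • ∑ i, (((1 / 2 : ℝ) + k i) • (y i • a i))) by
    exact fun t => (H t).1
  intro t
  induction t with
  | zero =>
    refine ⟨?_, Or.inl rfl⟩
    simp only [hgd0, smul_zero, h0]
    exact tendsto_const_nhds
  | succ t ih =>
    obtain ⟨ihT, ih2⟩ := ih
    rcases Nat.eq_zero_or_pos t with rfl | ht
    · -- step from 0 to 1: exact computation
      have key : ∀ γ : ℝ, γ ≠ 0 → γ⁻¹ • θ γ 1 = θhat 1 := by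
        intro γ hγ
        rw [step γ hγ 0, hgd0, smul_zero, zero_add, h1, h0, zero_add]
        have : ∀ i : Fin n,
            ((1 + Real.exp (y i * ⟪a i, (0 : EuclideanSpace ℝ (Fin d))⟫))⁻¹ * y i) • a i
              = (2 : ℝ)⁻¹ • (y i • a i) := by
          intro i
          rw [inner_zero_right, mul_zero, Real.exp_zero, smul_smul]
          norm_num
        rw [Finset.sum_congr rfl fun i _ => this i]
        rw [Finset.smul_sum, Finset.smul_sum]
        refine Finset.sum_congr rfl fun i _ => ?_
        rw [smul_smul, smul_smul, smul_smul]
        congr 1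
        ring
      have h2 : θhat 1 = ((1 : ℝ) / n) • ∑ i, (((1 / 2 : ℝ) + ((0 : Fin n → ℕ) i)) • (y i • a i)) := by
        rw [h1, h0, zero_add]
        simp only [Pi.zero_apply, Nat.cast_zero, add_zero]
        rw [Finset.smul_sum, Finset.smul_sum]
        refine Finset.sum_congr rfl fun i _ => ?_
        rw [smul_smul, smul_smul, smul_smul]
        congr 1
        ring
      refine ⟨?_, Or.inr ⟨0, h2⟩⟩
      refine Tendsto.congr' ?_ (tendsto_const_nhds (x := θhat 1))
      filter_upwards [eventually_ne_atTop (0 : ℝ)] with γ hγ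
      exact (key γ hγ).symm
    · -- step from t ≥ 1
      obtain ⟨k, hk⟩ : ∃ k : Fin n → ℕ,
          θhat t = ((1 : ℝ) / n) • ∑ i, (((1 / 2 : ℝ) + k i) • (y i • a i)) := by
        rcases ih2 with h | h
        · omega
        · exact h
      -- nondegeneracy: inner products with θhat t are nonzero
      have hne : ∀ j : Fin n, y j * ⟪a j, θhat t⟫ ≠ 0 := by
        intro j
        have expand : y j * ⟪a j, θhat t⟫
            = ((1 : ℝ) / n) * ∑ i, ((1 / 2 : ℝ) + k i) * ⟪y i • a i, y j • a j⟫ := by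
          rw [hk]
          simp only [real_inner_smul_right, inner_sum, real_inner_smul_left, Finset.mul_sum]
          refine Finset.sum_congr rfl fun i _ => ?_
          rw [real_inner_comm (a j) (a i)]
          ring
        rw [expand]
        exact mul_ne_zero (one_div_ne_zero hnR) (hnondeg j k)
      -- componentwise limits of the sigmoid coefficients
      have hC : ∀ i : Fin n,
          Tendsto (fun γ : ℝ => (1 + Real.exp (y i * ⟪a i, θ γ t⟫))⁻¹) atTop
            (nhds (if y i * ⟪a i, θhat t⟫ ≤ 0 then (1 : ℝ) else 0)) := by
        intro i
        have hg : Tendsto (fun γ : ℝ => y i * ⟪a i, γ⁻¹ • θ γ t⟫) atTop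
            (nhds (y i * ⟪a i, θhat t⟫)) :=
          (Filter.Tendsto.inner tendsto_const_nhds ihT).const_mul (y i)
        have := sigmoid_limit (hne i) hg
        refine this.congr' ?_
        filter_upwards [eventually_ne_atTop (0 : ℝ)] with γ hγ
        rw [real_inner_smul_right]
        field_simp
      -- limit of the rescaled iterates
      set L : EuclideanSpace ℝ (Fin d) :=
        θhat t + ((1 : ℝ) / n) •
          ∑ i, ((if y i * ⟪a i, θhat t⟫ ≤ 0 then (1 : ℝ) else 0) * y i) • a i with hL
      have hmain : Tendsto (fun γ : ℝ => γ⁻¹ • θ γ (t + 1)) atTop (nhds L) := by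
        have hsum : Tendsto (fun γ : ℝ =>
            ∑ i, ((1 + Real.exp (y i * ⟪a i, θ γ t⟫))⁻¹ * y i) • a i) atTop
            (nhds (∑ i, ((if y i * ⟪a i, θhat t⟫ ≤ 0 then (1 : ℝ) else 0) * y i) • a i)) := by
          refine tendsto_finset_sum _ fun i _ => ?_
          exact ((hC i).mul_const (y i)).smul_const (a i)
        have := ihT.add (hsum.const_smul ((1 : ℝ) / n))
        refine this.congr' ?_
        filter_upwards [eventually_ne_atTop (0 : ℝ)] with γ hγ
        exact (step γ hγ t).symm
      have hLeq : L = θhat (t + 1) := by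
        rw [hL, hstep t ht]
        congr 1
        congr 1
        rw [Finset.sum_filter]
        refine Finset.sum_congr rfl fun i _ => ?_
        split_ifs with h
        · rw [one_mul]
        · rw [zero_mul, zero_smul]
      -- new representation
      refine ⟨hLeq ▸ hmain, Or.inr ⟨fun i => k i + (if y i * ⟪a i, θhat t⟫ ≤ 0 then 1 else 0), ?_⟩⟩
      rw [hstep t ht, hk]
      rw [Finset.sum_filter, ← smul_add, ← Finset.sum_add_distrib]
      congr 1
      refine Finset.sum_congr rfl fun i _ => ?_
      split_ifs with h
      · simp only [if_pos h]
        push_cast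
        module
      · simp only [if_neg h]
        push_cast
        module
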